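/- Let α ∈ (0,1), β ∈ (0,1], and σ_N² > 0. Define the post-aggregation SNR as SNR_post = (α + (1-α)β)² · S / (α² σ_ε² + (1-α)² σ_N²) and the intrinsic SNR as SNR_int = S / σ_ε², where S > 0 and σ_ε² > 0. Define the threshold τ(β) = (1-α) σ_N² / (β(2α + (1-α)β)). Then SNR_post < SNR_int if and only if σ_ε² < τ(β). -/
import Mathlib


theorem snr_crossover (α β S σε2 σN2 : ℝ)
    (hα : α ∈ Set.Ioo (0:ℝ) 1) (hβ : β ∈ Set.Ioc (0:ℝ) 1)
    (hS : 0 < S) (hσε : 0 < σε2) (hσN : 0 < σN2) :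
    (α + (1-α)*β)^2 * S / (α^2 * σε2 + (1-α)^2 * σN2) < S / σε2 ↔
      σε2 < (1-α) * σN2 / (β * (2*α + (1-α)*β)) := by
  obtain ⟨hα0, hα1⟩ := hα
  obtain ⟨hβ0, hβ1⟩ := hβ
  have h1α : 0 < 1 - α := by linarith
  have hD : 0 < α^2 * σε2 + (1-α)^2 * σN2 := by positivity
  have hc : 0 < β * (2*α + (1-α)*β) := mul_pos hβ0 (by nlinarith [mul_pos h1α hβ0])
  rw [div_lt_div_iff₀ hD hσε, lt_div_iff₀ hc]
  constructor <;> intro h <;> nlinarith [mul_pos hS h1α, mul_pos hS hβ0,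
    mul_pos (mul_pos hS h1α) hβ0]
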